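/- Let X ∈ GL(n;ℍ) be an invertible homogeneous quaternionic matrix of even degree with respect to a grading of degree ν ∈ Γⁿ (Γ = {0,ĩ,j̃,k̃} ⊂ (ℤ/2)³). Then for any NS-multiplier σ, the graded determinant Gdet_σ(X) = det(J_σ(X)) (determinant computed in the commutative twisted algebra ℍ_σ) lies in ℝ^×·1 ∪ ℝ^×·i ∪ ℝ^×·j ∪ ℝ^×·k, i.e. Gdet_σ(X) is a nonzero homogeneous quaternion; moreover Gdet_σ(X) is invertible in ℍ. -/

import Mathlib

open Quaternion

namespace GdetQuaternion

/-- The grading group (ℤ/2)³. -/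
abbrev G3 := Fin 3 → ZMod 2

/-- The standard pairing ⟨x,y⟩ on (ℤ/2)³. -/
def ip (x y : G3) : ZMod 2 := x 0 * y 0 + x 1 * y 1 + x 2 * y 2

/-- The commutation factor λ(x,y) = (−1)^⟨x,y⟩, valued in ℝ. -/
def lamQ (x y : G3) : ℝ := (-1) ^ (ip x y).val

/-- Degrees of i, j, k. -/
def dI : G3 := ![0, 1, 1]
def dJ : G3 := ![1, 0, 1]
def dK : G3 := ![1, 1, 0]

/-- The homogeneous component of degree γ of a quaternion, for the grading
ℍ⁰ = ℝ·1, ℍ^ĩ = ℝ·i, ℍ^j̃ = ℝ·j, ℍ^k̃ = ℝ·k (all other components zero). -/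
noncomputable def comp (γ : G3) (a : ℍ[ℝ]) : ℍ[ℝ] :=
  if γ = 0 then ⟨a.re, 0, 0, 0⟩
  else if γ = dI then ⟨0, a.imI, 0, 0⟩
  else if γ = dJ then ⟨0, 0, a.imJ, 0⟩
  else if γ = dK then ⟨0, 0, 0, a.imK⟩
  else 0

/-- The twisted (Nekludova–Scheunert) product a⋆b = σ(ã,b̃)·ab, extended
bilinearly from homogeneous components. -/
noncomputable def tmul (σ : G3 → G3 → ℝ) (a b : ℍ[ℝ]) : ℍ[ℝ] :=
  ∑ γ : G3, ∑ δ : G3, σ γ δ • (comp γ a * comp δ b)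

/-- The determinant of a quaternionic matrix computed in the commutative
twisted algebra (ℍ,⋆): det M = Σ_p sign(p) · M_{p(1),1} ⋆ ⋯ ⋆ M_{p(n),n}. -/
noncomputable def tdet {n : ℕ} (σ : G3 → G3 → ℝ) (M : Matrix (Fin n) (Fin n) ℍ[ℝ]) : ℍ[ℝ] :=
  ∑ p : Equiv.Perm (Fin n),
    (Equiv.Perm.sign p : ℤ) • (List.ofFn fun i => M (p i) i).foldr (tmul σ) 1

lemma comp_at_zero (a : ℍ[ℝ]) : comp 0 a = ⟨a.re, 0,0,0⟩ := if_pos rfl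
lemma comp_at_dI (a : ℍ[ℝ]) : comp dI a = ⟨0, a.imI,0,0⟩ := by
  unfold comp; exact (if_neg (by decide)).trans (if_pos rfl)
lemma comp_at_dJ (a : ℍ[ℝ]) : comp dJ a = ⟨0,0, a.imJ,0⟩ := by
  unfold comp; exact (if_neg (by decide)).trans ((if_neg (by decide)).trans (if_pos rfl))
lemma comp_at_dK (a : ℍ[ℝ]) : comp dK a = ⟨0,0,0, a.imK⟩ := by
  unfold comp; exact (if_neg (by decide)).trans ((if_neg (by decide)).trans ((if_neg (by decide)).trans (if_pos rfl)))
lemma comp_at_odd (γ : G3) (h : ¬(γ = 0 ∨ γ = dI ∨ γ = dJ ∨ γ = dK)) (a : ℍ[ℝ]) :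
    comp γ a = 0 := by
  push_neg at h
  unfold comp; exact (if_neg h.1).trans ((if_neg h.2.1).trans ((if_neg h.2.2.1).trans (if_neg h.2.2.2)))
@[simp] lemma q_re_mul (p q : QuaternionAlgebra ℝ (-1) 0 (-1)) :
    (@HMul.hMul ℍ[ℝ] ℍ[ℝ] ℍ[ℝ] _ p q).re = p.re * q.re - p.imI * q.imI - p.imJ * q.imJ - p.imK * q.imK :=
  Quaternion.re_mul p q
@[simp] lemma q_imI_mul (p q : QuaternionAlgebra ℝ (-1) 0 (-1)) :
    (@HMul.hMul ℍ[ℝ] ℍ[ℝ] ℍ[ℝ] _ p q).imI = p.re * q.imI + p.imI * q.re + p.imJ * q.imK - p.imK * q.imJ :=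
  Quaternion.imI_mul p q
@[simp] lemma q_imJ_mul (p q : QuaternionAlgebra ℝ (-1) 0 (-1)) :
    (@HMul.hMul ℍ[ℝ] ℍ[ℝ] ℍ[ℝ] _ p q).imJ = p.re * q.imJ - p.imI * q.imK + p.imJ * q.re + p.imK * q.imI :=
  Quaternion.imJ_mul p q
@[simp] lemma q_imK_mul (p q : QuaternionAlgebra ℝ (-1) 0 (-1)) :
    (@HMul.hMul ℍ[ℝ] ℍ[ℝ] ℍ[ℝ] _ p q).imK = p.re * q.imK + p.imI * q.imJ - p.imJ * q.imI + p.imK * q.re :=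
  Quaternion.imK_mul p q
@[simp] lemma q_mk_re (a b c d : ℝ) : (⟨a,b,c,d⟩ : QuaternionAlgebra ℝ (-1) 0 (-1)).re = a := rfl
@[simp] lemma q_mk_imI (a b c d : ℝ) : (⟨a,b,c,d⟩ : QuaternionAlgebra ℝ (-1) 0 (-1)).imI = b := rfl
@[simp] lemma q_mk_imJ (a b c d : ℝ) : (⟨a,b,c,d⟩ : QuaternionAlgebra ℝ (-1) 0 (-1)).imJ = c := rfl
@[simp] lemma q_mk_imK (a b c d : ℝ) : (⟨a,b,c,d⟩ : QuaternionAlgebra ℝ (-1) 0 (-1)).imK = d := rfl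

lemma comp_zero (γ : G3) : comp γ (0 : ℍ[ℝ]) = 0 := by
  show (if γ = 0 then (0:ℍ[ℝ]) else if γ = dI then 0 else if γ = dJ then 0 else if γ = dK then 0 else 0) = 0
  simp

lemma add_self_G3 (a : G3) : a + a = 0 := by funext i; fin_cases i <;> (revert a; decide)
lemma sub_eq_addG (a b : G3) : a - b = a + b := by funext i; fin_cases i <;> (revert a b; decide)
lemma add00 : (0:G3) + 0 = 0 := by decide
lemma add0I : (0:G3) + dI = dI := by decide
lemma add0J : (0:G3) + dJ = dJ := by decide
lemma add0K : (0:G3) + dK = dK := by decide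
lemma addI0 : dI + 0 = dI := by decide
lemma addJ0 : dJ + 0 = dJ := by decide
lemma addK0 : dK + 0 = dK := by decide
lemma addII : dI + dI = 0 := by decide
lemma addJJ : dJ + dJ = 0 := by decide
lemma addKK : dK + dK = 0 := by decide
lemma addIJ : dI + dJ = dK := by decide
lemma addJI : dJ + dI = dK := by decide
lemma addIK : dI + dK = dJ := by decide
lemma addKI : dK + dI = dJ := by decide
lemma addJK : dJ + dK = dI := by decide
lemma addKJ : dK + dJ = dI := by decide

lemma comp_mul_comp (γ δ : G3) (a b : ℍ[ℝ]) :
    comp (γ + δ) (comp γ a * comp δ b) = comp γ a * comp δ b := by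
  rcases Decidable.em (γ = 0 ∨ γ = dI ∨ γ = dJ ∨ γ = dK) with hγ | hγ
  case inr => rw [comp_at_odd γ hγ, zero_mul, comp_zero]
  rcases Decidable.em (δ = 0 ∨ δ = dI ∨ δ = dJ ∨ δ = dK) with hδ | hδ
  case inr => rw [comp_at_odd δ hδ, mul_zero, comp_zero]
  rcases hγ with h|h|h|h <;> rcases hδ with h'|h'|h'|h' <;> subst h h' <;>
    simp only [add00, add0I, add0J, add0K, addI0, addJ0, addK0, addII, addJJ, addKK,
      addIJ, addJI, addIK, addKI, addJK, addKJ,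
      comp_at_zero, comp_at_dI, comp_at_dJ, comp_at_dK] <;>
    ext <;> simp

lemma lam00 : lamQ 0 0 = 1 := by norm_num [lamQ, show (ip 0 0).val = 0 by decide]
lemma lam0I : lamQ 0 dI = 1 := by norm_num [lamQ, show (ip 0 dI).val = 0 by decide]
lemma lam0J : lamQ 0 dJ = 1 := by norm_num [lamQ, show (ip 0 dJ).val = 0 by decide]
lemma lam0K : lamQ 0 dK = 1 := by norm_num [lamQ, show (ip 0 dK).val = 0 by decide]
lemma lamI0 : lamQ dI 0 = 1 := by norm_num [lamQ, show (ip dI 0).val = 0 by decide]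
lemma lamJ0 : lamQ dJ 0 = 1 := by norm_num [lamQ, show (ip dJ 0).val = 0 by decide]
lemma lamK0 : lamQ dK 0 = 1 := by norm_num [lamQ, show (ip dK 0).val = 0 by decide]
lemma lamII : lamQ dI dI = 1 := by norm_num [lamQ, show (ip dI dI).val = 0 by decide]
lemma lamJJ : lamQ dJ dJ = 1 := by norm_num [lamQ, show (ip dJ dJ).val = 0 by decide]
lemma lamKK : lamQ dK dK = 1 := by norm_num [lamQ, show (ip dK dK).val = 0 by decide]
lemma lamIJ : lamQ dI dJ = -1 := by norm_num [lamQ, show (ip dI dJ).val = 1 by decide]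
lemma lamJI : lamQ dJ dI = -1 := by norm_num [lamQ, show (ip dJ dI).val = 1 by decide]
lemma lamIK : lamQ dI dK = -1 := by norm_num [lamQ, show (ip dI dK).val = 1 by decide]
lemma lamKI : lamQ dK dI = -1 := by norm_num [lamQ, show (ip dK dI).val = 1 by decide]
lemma lamJK : lamQ dJ dK = -1 := by norm_num [lamQ, show (ip dJ dK).val = 1 by decide]
lemma lamKJ : lamQ dK dJ = -1 := by norm_num [lamQ, show (ip dK dJ).val = 1 by decide]

lemma comp_mul_comm (γ δ : G3) (a b : ℍ[ℝ]) :
    comp γ a * comp δ b = lamQ γ δ • (comp δ b * comp γ a) := by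
  rcases Decidable.em (γ = 0 ∨ γ = dI ∨ γ = dJ ∨ γ = dK) with hγ | hγ
  case inr => rw [comp_at_odd γ hγ, zero_mul, mul_zero, smul_zero]
  rcases Decidable.em (δ = 0 ∨ δ = dI ∨ δ = dJ ∨ δ = dK) with hδ | hδ
  case inr => rw [comp_at_odd δ hδ, zero_mul, mul_zero, smul_zero]
  rcases hγ with h|h|h|h <;> rcases hδ with h'|h'|h'|h' <;> subst h h' <;>
    simp only [lam00, lam0I, lam0J, lam0K, lamI0, lamJ0, lamK0, lamII, lamJJ, lamKK,
      lamIJ, lamJI, lamIK, lamKI, lamJK, lamKJ,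
      comp_at_zero, comp_at_dI, comp_at_dJ, comp_at_dK, one_smul, neg_smul] <;>
    ext <;> simp <;> ring

lemma pjZ_re (a : ℍ[ℝ]) : (comp 0 a).re = a.re := by rw [comp_at_zero]
lemma pjZ_imI (a : ℍ[ℝ]) : (comp 0 a).imI = 0 := by rw [comp_at_zero]
lemma pjZ_imJ (a : ℍ[ℝ]) : (comp 0 a).imJ = 0 := by rw [comp_at_zero]
lemma pjZ_imK (a : ℍ[ℝ]) : (comp 0 a).imK = 0 := by rw [comp_at_zero]
lemma pjI_re (a : ℍ[ℝ]) : (comp dI a).re = 0 := by rw [comp_at_dI]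
lemma pjI_imI (a : ℍ[ℝ]) : (comp dI a).imI = a.imI := by rw [comp_at_dI]
lemma pjI_imJ (a : ℍ[ℝ]) : (comp dI a).imJ = 0 := by rw [comp_at_dI]
lemma pjI_imK (a : ℍ[ℝ]) : (comp dI a).imK = 0 := by rw [comp_at_dI]
lemma pjJ_re (a : ℍ[ℝ]) : (comp dJ a).re = 0 := by rw [comp_at_dJ]
lemma pjJ_imI (a : ℍ[ℝ]) : (comp dJ a).imI = 0 := by rw [comp_at_dJ]
lemma pjJ_imJ (a : ℍ[ℝ]) : (comp dJ a).imJ = a.imJ := by rw [comp_at_dJ]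
lemma pjJ_imK (a : ℍ[ℝ]) : (comp dJ a).imK = 0 := by rw [comp_at_dJ]
lemma pjK_re (a : ℍ[ℝ]) : (comp dK a).re = 0 := by rw [comp_at_dK]
lemma pjK_imI (a : ℍ[ℝ]) : (comp dK a).imI = 0 := by rw [comp_at_dK]
lemma pjK_imJ (a : ℍ[ℝ]) : (comp dK a).imJ = 0 := by rw [comp_at_dK]
lemma pjK_imK (a : ℍ[ℝ]) : (comp dK a).imK = a.imK := by rw [comp_at_dK]
lemma comp_add (γ : G3) (a b : ℍ[ℝ]) : comp γ (a + b) = comp γ a + comp γ b := by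
  rcases Decidable.em (γ = 0 ∨ γ = dI ∨ γ = dJ ∨ γ = dK) with hγ | hγ
  case inr => rw [comp_at_odd γ hγ, comp_at_odd γ hγ, comp_at_odd γ hγ, add_zero]
  rcases hγ with h|h|h|h <;> subst h <;> ext <;> simp [pjZ_re, pjZ_imI, pjZ_imJ, pjZ_imK, pjI_re, pjI_imI, pjI_imJ, pjI_imK, pjJ_re, pjJ_imI, pjJ_imJ, pjJ_imK, pjK_re, pjK_imI, pjK_imJ, pjK_imK]
lemma comp_smul (γ : G3) (r : ℝ) (a : ℍ[ℝ]) : comp γ (r • a) = r • comp γ a := by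
  rcases Decidable.em (γ = 0 ∨ γ = dI ∨ γ = dJ ∨ γ = dK) with hγ | hγ
  case inr => rw [comp_at_odd γ hγ, comp_at_odd γ hγ, smul_zero]
  rcases hγ with h|h|h|h <;> subst h <;> ext <;> simp [pjZ_re, pjZ_imI, pjZ_imJ, pjZ_imK, pjI_re, pjI_imI, pjI_imJ, pjI_imK, pjJ_re, pjJ_imI, pjJ_imJ, pjJ_imK, pjK_re, pjK_imI, pjK_imJ, pjK_imK]
lemma comp_comp (γ δ : G3) (a : ℍ[ℝ]) :
    comp δ (comp γ a) = if δ = γ then comp γ a else 0 := by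
  by_cases hdg : δ = γ
  · subst hdg; rw [if_pos rfl]
    rcases Decidable.em (δ = 0 ∨ δ = dI ∨ δ = dJ ∨ δ = dK) with hγ | hγ
    case inr => rw [comp_at_odd δ hγ, comp_at_odd δ hγ]
    rcases hγ with h|h|h|h <;> subst h <;> ext <;> simp [pjZ_re, pjZ_imI, pjZ_imJ, pjZ_imK, pjI_re, pjI_imI, pjI_imJ, pjI_imK, pjJ_re, pjJ_imI, pjJ_imJ, pjJ_imK, pjK_re, pjK_imI, pjK_imJ, pjK_imK]
  · rw [if_neg hdg]
    rcases Decidable.em (γ = 0 ∨ γ = dI ∨ γ = dJ ∨ γ = dK) with hγ | hγ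
    case inr => rw [comp_at_odd γ hγ, comp_zero]
    rcases Decidable.em (δ = 0 ∨ δ = dI ∨ δ = dJ ∨ δ = dK) with hδ | hδ
    case inr => rw [comp_at_odd δ hδ]
    rcases hγ with h|h|h|h <;> rcases hδ with h'|h'|h'|h' <;> subst h h' <;> ext <;>
      simp_all [pjZ_re, pjZ_imI, pjZ_imJ, pjZ_imK, pjI_re, pjI_imI, pjI_imJ, pjI_imK, pjJ_re, pjJ_imI, pjJ_imJ, pjJ_imK, pjK_re, pjK_imI, pjK_imJ, pjK_imK]
lemma sum_comp (a : ℍ[ℝ]) : ∑ γ : G3, comp γ a = a := by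
  have huniv : (Finset.univ : Finset G3)
      = {(0:G3), dI, dJ, dK, ![1,0,0], ![0,1,0], ![0,0,1], ![1,1,1]} := by decide
  rw [huniv, Finset.sum_insert (by decide), Finset.sum_insert (by decide),
    Finset.sum_insert (by decide), Finset.sum_insert (by decide),
    Finset.sum_insert (by decide), Finset.sum_insert (by decide),
    Finset.sum_insert (by decide), Finset.sum_singleton,
    comp_at_odd ![1,0,0] (by decide), comp_at_odd ![0,1,0] (by decide),
    comp_at_odd ![0,0,1] (by decide), comp_at_odd ![1,1,1] (by decide)]
  ext <;> simp [pjZ_re, pjZ_imI, pjZ_imJ, pjZ_imK, pjI_re, pjI_imI, pjI_imJ, pjI_imK, pjJ_re, pjJ_imI, pjJ_imJ, pjJ_imK, pjK_re, pjK_imI, pjK_imJ, pjK_imK]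

section Sigma
variable {σ : G3 → G3 → ℝ}

lemma sig0L (hσne : ∀ x y, σ x y ≠ 0) (hσadd₁ : ∀ x y z, σ (x + y) z = σ x z * σ y z)
    (b : G3) : σ 0 b = 1 := by
  have h := hσadd₁ 0 0 b
  rw [add00] at h
  exact (mul_left_cancel₀ (hσne 0 b) (by rw [← h, mul_one])).symm

lemma sig0R (hσne : ∀ x y, σ x y ≠ 0) (hσadd₂ : ∀ x y z, σ x (y + z) = σ x y * σ x z)
    (a : G3) : σ a 0 = 1 := by
  have h := hσadd₂ a 0 0
  rw [add00] at h
  exact (mul_left_cancel₀ (hσne a 0) (by rw [← h, mul_one])).symm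

lemma sig_sq (hσne : ∀ x y, σ x y ≠ 0) (hσadd₁ : ∀ x y z, σ (x + y) z = σ x z * σ y z)
    (a b : G3) : σ a b * σ a b = 1 := by
  have h := hσadd₁ a a b
  rw [add_self_G3, sig0L hσne hσadd₁] at h
  exact h.symm

lemma sig_inv (hσne : ∀ x y, σ x y ≠ 0) (hσadd₁ : ∀ x y z, σ (x + y) z = σ x z * σ y z)
    (a b : G3) : (σ a b)⁻¹ = σ a b :=
  inv_eq_of_mul_eq_one_right (sig_sq hσne hσadd₁ a b)

lemma tmul_add_left (a a' b : ℍ[ℝ]) : tmul σ (a + a') b = tmul σ a b + tmul σ a' b := by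
  unfold tmul
  rw [← Finset.sum_add_distrib]
  refine Finset.sum_congr rfl fun γ _ => ?_
  rw [← Finset.sum_add_distrib]
  refine Finset.sum_congr rfl fun δ _ => ?_
  rw [comp_add, add_mul, smul_add]

lemma tmul_add_right (a b b' : ℍ[ℝ]) : tmul σ a (b + b') = tmul σ a b + tmul σ a b' := by
  unfold tmul
  rw [← Finset.sum_add_distrib]
  refine Finset.sum_congr rfl fun γ _ => ?_
  rw [← Finset.sum_add_distrib]
  refine Finset.sum_congr rfl fun δ _ => ?_
  rw [comp_add, mul_add, smul_add]

lemma tmul_smul_left (r : ℝ) (a b : ℍ[ℝ]) : tmul σ (r • a) b = r • tmul σ a b := by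
  unfold tmul
  rw [Finset.smul_sum]
  refine Finset.sum_congr rfl fun γ _ => ?_
  rw [Finset.smul_sum]
  refine Finset.sum_congr rfl fun δ _ => ?_
  rw [comp_smul, smul_mul_assoc, smul_comm]

lemma tmul_smul_right (r : ℝ) (a b : ℍ[ℝ]) : tmul σ a (r • b) = r • tmul σ a b := by
  unfold tmul
  rw [Finset.smul_sum]
  refine Finset.sum_congr rfl fun γ _ => ?_
  rw [Finset.smul_sum]
  refine Finset.sum_congr rfl fun δ _ => ?_
  rw [comp_smul, mul_smul_comm, smul_comm]

lemma tmul_zero_left (b : ℍ[ℝ]) : tmul σ 0 b = 0 := by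
  unfold tmul
  simp [comp_zero]

lemma tmul_zero_right (a : ℍ[ℝ]) : tmul σ a 0 = 0 := by
  unfold tmul
  simp [comp_zero]

lemma tmul_homog_left {α : G3} {a : ℍ[ℝ]} (ha : comp α a = a) (b : ℍ[ℝ]) :
    tmul σ a b = ∑ δ : G3, σ α δ • (a * comp δ b) := by
  unfold tmul
  rw [Finset.sum_eq_single α]
  · rw [ha]
  · intro γ _ hγ
    rw [← ha, comp_comp, if_neg hγ]
    simp
  · intro h; exact absurd (Finset.mem_univ α) h

lemma tmul_homog {α β : G3} {a b : ℍ[ℝ]} (ha : comp α a = a) (hb : comp β b = b) :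
    tmul σ a b = σ α β • (a * b) := by
  rw [tmul_homog_left ha, Finset.sum_eq_single β]
  · rw [hb]
  · intro δ _ hδ
    rw [← hb, comp_comp, if_neg hδ]
    simp
  · intro h; exact absurd (Finset.mem_univ β) h

lemma comp_tmul {α β : G3} {a b : ℍ[ℝ]} (ha : comp α a = a) (hb : comp β b = b) :
    comp (α + β) (tmul σ a b) = tmul σ a b := by
  rw [tmul_homog ha hb, comp_smul]
  congr 1
  conv_lhs => rw [← ha, ← hb]
  conv_rhs => rw [← ha, ← hb]
  exact comp_mul_comp α β a b

end Sigma

section Ring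
variable {σ : G3 → G3 → ℝ}

lemma tmul_homog_right {β : G3} {b : ℍ[ℝ]} (hb : comp β b = b) (a : ℍ[ℝ]) :
    tmul σ a b = ∑ γ : G3, σ γ β • (comp γ a * b) := by
  unfold tmul
  refine Finset.sum_congr rfl fun γ _ => ?_
  rw [Finset.sum_eq_single β]
  · rw [hb]
  · intro δ _ hδ
    rw [← hb, comp_comp, if_neg hδ]
    simp
  · intro h; exact absurd (Finset.mem_univ β) h

lemma tmul_sum_left {ι : Type*} (fs : Finset ι) (f : ι → ℍ[ℝ]) (c : ℍ[ℝ]) :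
    tmul σ (∑ s ∈ fs, f s) c = ∑ s ∈ fs, tmul σ (f s) c := by
  classical
  induction fs using Finset.induction with
  | empty => simp [tmul_zero_left]
  | insert _ _ h ih => rw [Finset.sum_insert h, Finset.sum_insert h, tmul_add_left, ih]

lemma tmul_sum_right {ι : Type*} (fs : Finset ι) (f : ι → ℍ[ℝ]) (c : ℍ[ℝ]) :
    tmul σ c (∑ s ∈ fs, f s) = ∑ s ∈ fs, tmul σ c (f s) := by
  classical
  induction fs using Finset.induction with
  | empty => simp [tmul_zero_right]
  | insert _ _ h ih => rw [Finset.sum_insert h, Finset.sum_insert h, tmul_add_right, ih]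

lemma tmul_assoc (hσadd₁ : ∀ x y z, σ (x + y) z = σ x z * σ y z)
    (hσadd₂ : ∀ x y z, σ x (y + z) = σ x y * σ x z) (a b c : ℍ[ℝ]) :
    tmul σ (tmul σ a b) c = tmul σ a (tmul σ b c) := by
  have hab : tmul σ a b = ∑ γ : G3, ∑ δ : G3, σ γ δ • (comp γ a * comp δ b) := rfl
  have hbc : tmul σ b c = ∑ δ : G3, ∑ ε : G3, σ δ ε • (comp δ b * comp ε c) := rfl
  have lhs_eq : tmul σ (tmul σ a b) c
      = ∑ γ : G3, ∑ δ : G3, ∑ ε : G3,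
          (σ γ δ * (σ γ ε * σ δ ε)) • (comp γ a * (comp δ b * comp ε c)) := by
    rw [hab, tmul_sum_left]
    refine Finset.sum_congr rfl fun γ _ => ?_
    rw [tmul_sum_left]
    refine Finset.sum_congr rfl fun δ _ => ?_
    rw [tmul_smul_left, tmul_homog_left (comp_mul_comp γ δ a b), Finset.smul_sum]
    refine Finset.sum_congr rfl fun ε _ => ?_
    rw [smul_smul, hσadd₁, mul_assoc (comp γ a)]
  have rhs_eq : tmul σ a (tmul σ b c)
      = ∑ δ : G3, ∑ ε : G3, ∑ γ : G3,
          (σ δ ε * (σ γ δ * σ γ ε)) • (comp γ a * (comp δ b * comp ε c)) := by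
    rw [hbc, tmul_sum_right]
    refine Finset.sum_congr rfl fun δ _ => ?_
    rw [tmul_sum_right]
    refine Finset.sum_congr rfl fun ε _ => ?_
    rw [tmul_smul_right, tmul_homog_right (comp_mul_comp δ ε b c), Finset.smul_sum]
    refine Finset.sum_congr rfl fun γ _ => ?_
    rw [smul_smul, hσadd₂]
  rw [lhs_eq, rhs_eq, Finset.sum_comm]
  refine Finset.sum_congr rfl fun δ _ => ?_
  rw [Finset.sum_comm]
  refine Finset.sum_congr rfl fun ε _ => Finset.sum_congr rfl fun γ _ => ?_
  congr 1
  ring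

lemma even_ip : ∀ γ : G3, (γ = 0 ∨ γ = dI ∨ γ = dJ ∨ γ = dK) → ip γ γ = 0 := by decide

lemma tmul_comm (hNS : ∀ x y, lamQ x y * σ x y =
      (-1 : ℝ) ^ ((ip x x).val * (ip y y).val) * σ y x) (a b : ℍ[ℝ]) :
    tmul σ a b = tmul σ b a := by
  unfold tmul
  rw [Finset.sum_comm]
  refine Finset.sum_congr rfl fun δ _ => Finset.sum_congr rfl fun γ _ => ?_
  by_cases hγ : γ = 0 ∨ γ = dI ∨ γ = dJ ∨ γ = dK
  case neg => rw [comp_at_odd γ hγ]; simp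
  by_cases hδ : δ = 0 ∨ δ = dI ∨ δ = dJ ∨ δ = dK
  case neg => rw [comp_at_odd δ hδ]; simp
  have hns := hNS γ δ
  rw [even_ip γ hγ, even_ip δ hδ] at hns
  simp only [ZMod.val_zero, Nat.zero_mul, pow_zero, one_mul] at hns
  rw [comp_mul_comm γ δ a b, smul_smul, mul_comm (σ γ δ), hns]

lemma comp_one : comp 0 (1 : ℍ[ℝ]) = 1 := by
  rw [comp_at_zero]; ext <;> simp

lemma one_tmul (hσne : ∀ x y, σ x y ≠ 0) (hσadd₁ : ∀ x y z, σ (x + y) z = σ x z * σ y z)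
    (a : ℍ[ℝ]) : tmul σ 1 a = a := by
  rw [tmul_homog_left comp_one]
  simp only [sig0L hσne hσadd₁, one_smul, one_mul]
  exact sum_comp a

lemma tmul_one (hσne : ∀ x y, σ x y ≠ 0) (hσadd₂ : ∀ x y z, σ x (y + z) = σ x y * σ x z)
    (a : ℍ[ℝ]) : tmul σ a 1 = a := by
  rw [tmul_homog_right comp_one]
  simp only [sig0R hσne hσadd₂, one_smul, mul_one]
  exact sum_comp a

end Ring

def Hs (σ : G3 → G3 → ℝ) : Type := ℍ[ℝ]

noncomputable instance (σ : G3 → G3 → ℝ) : AddCommGroup (Hs σ) :=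
  inferInstanceAs (AddCommGroup ℍ[ℝ])

noncomputable def hsCommRing (σ : G3 → G3 → ℝ)
    (hσne : ∀ x y, σ x y ≠ 0)
    (hσadd₁ : ∀ x y z, σ (x + y) z = σ x z * σ y z)
    (hσadd₂ : ∀ x y z, σ x (y + z) = σ x y * σ x z)
    (hNS : ∀ x y, lamQ x y * σ x y =
      (-1 : ℝ) ^ ((ip x x).val * (ip y y).val) * σ y x) :
    CommRing (Hs σ) where
  __ := (inferInstance : AddCommGroup (Hs σ))
  mul := tmul σ
  left_distrib := fun a b c => tmul_add_right a b c
  right_distrib := fun a b c => tmul_add_left a b c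
  zero_mul := tmul_zero_left
  mul_zero := tmul_zero_right
  mul_assoc := tmul_assoc hσadd₁ hσadd₂
  one := (1 : ℍ[ℝ])
  one_mul := one_tmul hσne hσadd₁
  mul_one := tmul_one hσne hσadd₂
  mul_comm := tmul_comm hNS


section More
variable {σ : G3 → G3 → ℝ}

lemma comp_sum {ι : Type*} (γ : G3) (fs : Finset ι) (f : ι → ℍ[ℝ]) :
    comp γ (∑ s ∈ fs, f s) = ∑ s ∈ fs, comp γ (f s) := by
  classical
  induction fs using Finset.induction with
  | empty => simp [comp_zero]
  | insert _ _ h ih => rw [Finset.sum_insert h, Finset.sum_insert h, comp_add, ih]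

lemma comp_zsmul (γ : G3) (z : ℤ) (a : ℍ[ℝ]) : comp γ (z • a) = z • comp γ a := by
  have h1 : (z : ℤ) • a = (z : ℝ) • a := by
    rw [← Int.cast_smul_eq_zsmul ℝ]
  have h2 : (z : ℤ) • comp γ a = (z : ℝ) • comp γ a := by
    rw [← Int.cast_smul_eq_zsmul ℝ]
  rw [h1, h2, comp_smul]

lemma comp_foldr (l : List (G3 × ℍ[ℝ])) (h : ∀ p ∈ l, comp p.1 p.2 = p.2) :
    comp (l.map Prod.fst).sum ((l.map Prod.snd).foldr (tmul σ) 1)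
      = (l.map Prod.snd).foldr (tmul σ) 1 := by
  induction l with
  | nil => simpa using comp_one
  | cons hd tl ih =>
    simp only [List.map_cons, List.sum_cons, List.foldr_cons]
    exact comp_tmul (h hd (by simp)) (ih fun p hp => h p (by simp [hp]))

lemma homog_mul_comp {α : G3} {a : ℍ[ℝ]} (hα : comp α a = a) (γ : G3) (w : ℍ[ℝ]) :
    a * comp γ w = comp (α + γ) (a * w) := by
  have key : ∀ δ : G3, comp (α + δ) (a * comp δ w) = a * comp δ w := by
    intro δ
    have hcc : comp δ (comp δ w) = comp δ w := by rw [comp_comp, if_pos rfl]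
    conv_lhs => rw [← hα, ← hcc]
    conv_rhs => rw [← hα, ← hcc]
    exact comp_mul_comp _ _ _ _
  have hw : a * w = ∑ δ : G3, a * comp δ w := by rw [← Finset.mul_sum, sum_comp]
  rw [hw, comp_sum, Finset.sum_eq_single γ]
  · exact (key γ).symm
  · intro δ _ hδ
    rw [← key δ, comp_comp, if_neg]
    intro hc
    exact hδ (add_left_cancel (a := α) (by rw [hc] : α + δ = α + γ))
  · intro h; exact absurd (Finset.mem_univ γ) h

lemma deg_cancel (a b c d : G3) : (a + b - c) + (a + d - b) = c + d := by
  funext t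
  simp only [Pi.add_apply, Pi.sub_apply]
  generalize a t = A; generalize b t = B; generalize c t = C; generalize d t = D
  revert A B C D; decide

end More


lemma scalar_id {σ : G3 → G3 → ℝ} (hσne : ∀ x y, σ x y ≠ 0)
    (hσadd₁ : ∀ x y z, σ (x + y) z = σ x z * σ y z)
    (hσadd₂ : ∀ x y z, σ x (y + z) = σ x y * σ x z)
    (x a b c : G3) :
    σ (x + b - a) (x + c - b) * ((σ x b * (σ a (x + b - a))⁻¹) * (σ x c * (σ b (x + c - b))⁻¹))
      = σ x x * σ a (a + c) := by
  have hsq : ∀ u v, σ u v ^ 2 = 1 := fun u v => by rw [sq]; exact sig_sq hσne hσadd₁ u v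
  rw [sub_eq_addG, sub_eq_addG, sig_inv hσne hσadd₁, sig_inv hσne hσadd₁]
  simp only [hσadd₁, hσadd₂]
  ring_nf
  simp [hsq]

lemma even_four : ∀ g : G3, ip g g = 0 → g = 0 ∨ g = dI ∨ g = dJ ∨ g = dK := by decide

/-- Let X be an invertible homogeneous quaternionic matrix of even degree x
with respect to a grading of degree ν (all degrees in the even subgroup
Γ = {0,ĩ,j̃,k̃} ⊂ (ℤ/2)³), and let σ be an NS-multiplier. Then the graded
determinant Gdet_σ(X) = det(J_σ(X)) is a nonzero homogeneous quaternion,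
lying in ℝ^×·1 ∪ ℝ^×·i ∪ ℝ^×·j ∪ ℝ^×·k, and is invertible in ℍ. -/
theorem gdet_homogeneous_invertible
    (σ : G3 → G3 → ℝ)
    (hσne : ∀ x y, σ x y ≠ 0)
    (hσadd₁ : ∀ x y z, σ (x + y) z = σ x z * σ y z)
    (hσadd₂ : ∀ x y z, σ x (y + z) = σ x y * σ x z)
    (hNS : ∀ x y, lamQ x y * σ x y =
      (-1 : ℝ) ^ ((ip x x).val * (ip y y).val) * σ y x)
    {n : ℕ} (ν : Fin n → G3) (x : G3)
    (hx : ip x x = 0) (hν : ∀ i, ip (ν i) (ν i) = 0)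
    (X : Matrix (Fin n) (Fin n) ℍ[ℝ])
    (hX : ∀ i j, comp (x + ν j - ν i) (X i j) = X i j)
    (hXinv : IsUnit X) :
    (∃ r : ℝ, r ≠ 0 ∧
      (tdet σ (fun i j => (σ x (ν j) * (σ (ν i) (x + ν j - ν i))⁻¹) • X i j)
          = r • (1 : ℍ[ℝ]) ∨
       tdet σ (fun i j => (σ x (ν j) * (σ (ν i) (x + ν j - ν i))⁻¹) • X i j)
          = r • (⟨0, 1, 0, 0⟩ : ℍ[ℝ]) ∨
       tdet σ (fun i j => (σ x (ν j) * (σ (ν i) (x + ν j - ν i))⁻¹) • X i j)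
          = r • (⟨0, 0, 1, 0⟩ : ℍ[ℝ]) ∨
       tdet σ (fun i j => (σ x (ν j) * (σ (ν i) (x + ν j - ν i))⁻¹) • X i j)
          = r • (⟨0, 0, 0, 1⟩ : ℍ[ℝ]))) ∧
    IsUnit (tdet σ (fun i j => (σ x (ν j) * (σ (ν i) (x + ν j - ν i))⁻¹) • X i j)) := by
  classical
  set Y : Matrix (Fin n) (Fin n) ℍ[ℝ] :=
    fun i j => (σ x (ν j) * (σ (ν i) (x + ν j - ν i))⁻¹) • X i j with hY
  letI : CommRing (Hs σ) := hsCommRing σ hσne hσadd₁ hσadd₂ hNS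
  have hmulHs : ∀ a b : Hs σ, a * b = tmul σ a b := fun _ _ => rfl
  let A : Matrix (Fin n) (Fin n) (Hs σ) := Y
  -- bridge between tdet and det over Hs
  have hbridge : tdet σ Y = A.det := by
    rw [Matrix.det_apply, tdet]
    refine Finset.sum_congr rfl fun p _ => ?_
    rw [Units.smul_def]
    congr 1
    rw [show (∏ i, A (p i) i) = (List.ofFn fun i => A (p i) i).prod from
      List.prod_ofFn.symm, List.prod_eq_foldr]
    rfl
  -- homogeneity of entries of Y
  have hYhom : ∀ i j, comp (x + ν j - ν i) (Y i j) = Y i j := by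
    intro i j
    simp only [hY]
    rw [comp_smul, hX i j]
  -- degree sum
  have hdeg : ∀ p : Equiv.Perm (Fin n), (∑ i, (x + ν i - ν (p i))) = n • x := by
    intro p
    rw [Finset.sum_sub_distrib, Equiv.sum_comp p ν, Finset.sum_add_distrib,
      Finset.sum_const, Finset.card_univ, Fintype.card_fin, add_sub_cancel_right]
  -- homogeneity of tdet
  have hDhom : comp (n • x) (tdet σ Y) = tdet σ Y := by
    rw [tdet, comp_sum]
    refine Finset.sum_congr rfl fun p _ => ?_
    rw [comp_zsmul]
    congr 1
    have hfold := comp_foldr (σ := σ)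
      (List.ofFn fun i => (x + ν i - ν (p i), Y (p i) i)) (by
        intro q hq
        rw [List.mem_ofFn] at hq
        obtain ⟨i, rfl⟩ := hq
        exact hYhom (p i) i)
    simp only [List.map_ofFn, Function.comp_def, List.sum_ofFn] at hfold
    rw [hdeg p] at hfold
    exact hfold
  -- invertibility: construct homogeneous inverse
  obtain ⟨u, hu⟩ := hXinv
  set W : Matrix (Fin n) (Fin n) ℍ[ℝ] := Units.val u⁻¹ with hWdef
  have hXW : X * W = 1 := by rw [← hu, hWdef]; exact u.mul_inv
  set Z : Matrix (Fin n) (Fin n) ℍ[ℝ] := fun i j => comp (x + ν j - ν i) (W i j) with hZdef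
  have hZhom : ∀ i j, comp (x + ν j - ν i) (Z i j) = Z i j := by
    intro i j
    simp only [hZdef]
    rw [comp_comp, if_pos rfl]
  have hXZ : X * Z = 1 := by
    refine Matrix.ext fun i k => ?_
    rw [Matrix.mul_apply]
    have e1 : ∀ j, X i j * Z j k = comp (ν i + ν k) (X i j * W j k) := by
      intro j
      simp only [hZdef]
      rw [homog_mul_comp (hX i j), deg_cancel]
    rw [Finset.sum_congr rfl fun j _ => e1 j, ← comp_sum, ← Matrix.mul_apply, hXW]
    by_cases hik : i = k
    · subst hik
      rw [Matrix.one_apply_eq, add_self_G3, comp_one]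
    · rw [Matrix.one_apply_ne hik, comp_zero]
  let B : Matrix (Fin n) (Fin n) (Hs σ) :=
    fun i j => (σ x (ν j) * (σ (ν i) (x + ν j - ν i))⁻¹) • Z i j
  have hAB : A * B = fun i k => if i = k then ((σ x x • (1 : ℍ[ℝ])) : Hs σ) else 0 := by
    refine Matrix.ext fun i k => ?_
    rw [Matrix.mul_apply]
    have e2 : ∀ j, A i j * B j k
        = (σ x x * σ (ν i) (ν i + ν k)) • (X i j * Z j k) := by
      intro j
      have hA : A i j = ((σ x (ν j) * (σ (ν i) (x + ν j - ν i))⁻¹) • X i j : ℍ[ℝ]) := rfl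
      have hB : B j k = ((σ x (ν k) * (σ (ν j) (x + ν k - ν j))⁻¹) • Z j k : ℍ[ℝ]) := rfl
      rw [hmulHs, hA, hB, tmul_smul_left, tmul_smul_right,
        tmul_homog (hX i j) (hZhom j k), smul_smul, smul_smul]
      congr 1
      have hs := scalar_id hσne hσadd₁ hσadd₂ x (ν i) (ν j) (ν k)
      rw [← hs]; ring
    have e3 : ∑ j, ((σ x x * σ (ν i) (ν i + ν k)) • (X i j * Z j k) : ℍ[ℝ])
        = (σ x x * σ (ν i) (ν i + ν k)) • ((X * Z) i k) := by
      rw [Matrix.mul_apply, Finset.smul_sum]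
    rw [Finset.sum_congr rfl fun j _ => e2 j]
    refine e3.trans ?_
    rw [hXZ]
    by_cases hik : i = k
    · subst hik
      rw [Matrix.one_apply_eq, if_pos rfl, add_self_G3, sig0R hσne hσadd₂, mul_one]
    · rw [Matrix.one_apply_ne hik, smul_zero, if_neg hik]
  have hdetC : IsUnit (Matrix.det
      ((fun i k => if i = k then ((σ x x • (1 : ℍ[ℝ])) : Hs σ) else 0) :
        Matrix (Fin n) (Fin n) (Hs σ))) := by
    have hdiag : ((fun i k => if i = k then ((σ x x • (1 : ℍ[ℝ])) : Hs σ) else 0) :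
        Matrix (Fin n) (Fin n) (Hs σ))
        = Matrix.diagonal (α := Hs σ) (fun _ => ((σ x x • (1 : ℍ[ℝ])) : Hs σ)) := by
      refine Matrix.ext fun i k => ?_
      exact (Matrix.diagonal_apply (α := Hs σ) (fun _ => ((σ x x • (1 : ℍ[ℝ])) : Hs σ)) i k).symm
    have key : ∀ c : Hs σ, IsUnit c → IsUnit (Matrix.det (Matrix.diagonal fun _ : Fin n => c)) :=
      fun c hc => by rw [Matrix.det_diagonal, Finset.prod_const]; exact hc.pow _
    rw [hdiag]
    refine key _ ?_
    refine IsUnit.of_mul_eq_one (((σ x x)⁻¹ • (1 : ℍ[ℝ])) : Hs σ) ?_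
    rw [hmulHs (σ x x • (1 : ℍ[ℝ])) ((σ x x)⁻¹ • (1 : ℍ[ℝ])), tmul_smul_left, tmul_smul_right, smul_smul,
      mul_inv_cancel₀ (hσne x x), one_smul]
    show tmul σ 1 1 = 1
    exact one_tmul hσne hσadd₁ 1
  have hdetA : IsUnit A.det := by
    have hmul := Matrix.det_mul A B
    rw [hAB] at hmul
    exact isUnit_of_mul_isUnit_left ((congrArg IsUnit hmul).mp hdetC)
  rw [← hbridge] at hdetA
  have hDne : tdet σ Y ≠ 0 := by
    intro h0
    obtain ⟨v, hv⟩ := hdetA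
    have hw : ∃ w : Hs σ, tmul σ (tdet σ Y) w = 1 :=
      ⟨((v⁻¹ : (Hs σ)ˣ) : Hs σ), (congrArg (fun t : ℍ[ℝ] => tmul σ t ((v⁻¹ : (Hs σ)ˣ) : Hs σ)) hv).symm.trans
        (v.mul_inv : (v : Hs σ) * ((v⁻¹ : (Hs σ)ˣ) : Hs σ) = 1)⟩
    obtain ⟨w, hv1⟩ := hw
    rw [h0] at hv1
    exact one_ne_zero (hv1.symm.trans (tmul_zero_left w))
  have hunitH : IsUnit (tdet σ Y) := isUnit_iff_ne_zero.mpr hDne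
  -- degree is even
  have hg : ip (n • x) (n • x) = 0 := by
    rcases Nat.even_or_odd n with he | ho
    · obtain ⟨k, hk⟩ := he
      have h0 : n • x = (0 : G3) := by rw [hk, add_nsmul]; exact add_self_G3 _
      rw [h0]; decide
    · obtain ⟨k, hk⟩ := ho
      have h0 : n • x = x := by
        have h2 : (2 * k) • x = 0 := by rw [mul_nsmul, two_nsmul, add_self_G3, smul_zero]
        rw [hk, add_nsmul, one_nsmul, h2, zero_add]
      rw [h0]; exact hx
  refine ⟨?_, hunitH⟩
  rcases even_four (n • x) hg with h0 | h0 | h0 | h0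
  · rw [h0] at hDhom
    refine ⟨(tdet σ Y).re, ?_, Or.inl ?_⟩
    · intro hr
      apply hDne
      rw [← hDhom, comp_at_zero, hr]
      ext <;> simp
    · rw [← hDhom, comp_at_zero]
      ext <;> simp
  · rw [h0] at hDhom
    refine ⟨(tdet σ Y).imI, ?_, Or.inr (Or.inl ?_)⟩
    · intro hr
      apply hDne
      rw [← hDhom, comp_at_dI, hr]
      ext <;> simp
    · rw [← hDhom, comp_at_dI]
      ext <;> simp
  · rw [h0] at hDhom
    refine ⟨(tdet σ Y).imJ, ?_, Or.inr (Or.inr (Or.inl ?_))⟩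
    · intro hr
      apply hDne
      rw [← hDhom, comp_at_dJ, hr]
      ext <;> simp
    · rw [← hDhom, comp_at_dJ]
      ext <;> simp
  · rw [h0] at hDhom
    refine ⟨(tdet σ Y).imK, ?_, Or.inr (Or.inr (Or.inr ?_))⟩
    · intro hr
      apply hDne
      rw [← hDhom, comp_at_dK, hr]
      ext <;> simp
    · rw [← hDhom, comp_at_dK]
      ext <;> simp


end GdetQuaternion
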